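/- Let m ≥ 1 be an integer. For s ≥ 0 let k(s) = ⌊√(s + 1/4) + 1/2⌋ and p(s) = k(s) mod m. Then there is a constant C such that for all t ≥ 1, |(1/t) ∫₀ᵗ ( p(s)(m − p(s))/(2m) − (1/12)(m − 1/m) ) ds| ≤ C t^{−1/2}. -/

import Mathlib

open Real MeasureTheory Finset

namespace LuneAux

/-- The integrand. -/
noncomputable def f (m : ℕ) (s : ℝ) : ℝ :=
  ((⌊Real.sqrt (s + 1 / 4) + 1 / 2⌋ % (m : ℤ) : ℤ) : ℝ)
    * ((m : ℝ) - ((⌊Real.sqrt (s + 1 / 4) + 1 / 2⌋ % (m : ℤ) : ℤ) : ℝ)) / (2 * m)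
  - (1 / 12) * ((m : ℝ) - 1 / m)

/-- The value on the k-th block. -/
noncomputable def a (m k : ℕ) : ℝ :=
  (((k : ℤ) % (m : ℤ) : ℤ) : ℝ) * ((m : ℝ) - (((k : ℤ) % (m : ℤ) : ℤ) : ℝ)) / (2 * m)
  - (1 / 12) * ((m : ℝ) - 1 / m)

lemma val_bound (m : ℕ) (hm : 1 ≤ m) (z : ℤ) :
    |((z % (m : ℤ) : ℤ) : ℝ) * ((m : ℝ) - ((z % (m : ℤ) : ℤ) : ℝ)) / (2 * m)
      - (1 / 12) * ((m : ℝ) - 1 / m)| ≤ 2 * m := by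
  have hm0 : (0:ℤ) < (m:ℤ) := by exact_mod_cast hm
  have h0 : (0:ℤ) ≤ z % (m:ℤ) := Int.emod_nonneg z (by omega)
  have h1 : z % (m:ℤ) < m := Int.emod_lt_of_pos z hm0
  set p : ℝ := ((z % (m : ℤ) : ℤ) : ℝ) with hp
  have hp0 : 0 ≤ p := by rw [hp]; exact_mod_cast h0
  have hp1 : p ≤ (m:ℝ) := by rw [hp]; exact_mod_cast h1.le
  have hmr : (1:ℝ) ≤ (m:ℝ) := by exact_mod_cast hm
  have hm0' : (0:ℝ) < 2 * m := by linarith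
  have hx0 : 0 ≤ p * ((m:ℝ) - p) / (2 * m) := by
    apply div_nonneg _ hm0'.le
    nlinarith
  have hx1 : p * ((m:ℝ) - p) / (2 * m) ≤ (m:ℝ) := by
    rw [div_le_iff₀ hm0']
    nlinarith
  have hy0 : 0 ≤ (1 / 12) * ((m:ℝ) - 1 / m) := by
    have : 1 / (m:ℝ) ≤ 1 := by
      rw [div_le_one (by linarith)]; exact hmr
    nlinarith
  have hy1 : (1 / 12) * ((m:ℝ) - 1 / m) ≤ (m:ℝ) := by
    have : 0 ≤ 1 / (m:ℝ) := by positivity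
    nlinarith
  rw [abs_le]
  constructor <;> nlinarith

lemma a_bound (m : ℕ) (hm : 1 ≤ m) (k : ℕ) : |a m k| ≤ 2 * m := val_bound m hm k

lemma f_bound (m : ℕ) (hm : 1 ≤ m) (s : ℝ) : |f m s| ≤ 2 * m := val_bound m hm _

lemma f_meas (m : ℕ) : Measurable (f m) := by
  have h1 : Measurable fun s : ℝ => (⌊Real.sqrt (s + 1 / 4) + 1 / 2⌋ : ℤ) := by
    apply Measurable.floor
    exact (Real.continuous_sqrt.comp (continuous_id.add continuous_const)).measurable.add
      measurable_const
  have h2 : Measurable fun z : ℤ =>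
      ((z % (m : ℤ) : ℤ) : ℝ) * ((m : ℝ) - ((z % (m : ℤ) : ℤ) : ℝ)) / (2 * m)
        - (1 / 12) * ((m : ℝ) - 1 / m) := measurable_from_top
  exact h2.comp h1

lemma f_intble (m : ℕ) (hm : 1 ≤ m) (x y : ℝ) : IntervalIntegrable (f m) volume x y := by
  rw [intervalIntegrable_iff]
  refine ((integrableOn_const_iff (C := 2*(m:ℝ))).mpr (Or.inr measure_Ioc_lt_top)).mono'
    ((f_meas m).aestronglyMeasurable.restrict) (ae_of_all _ fun s => ?_)
  simpa using f_bound m hm s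

lemma floor_eq (K : ℕ) (hK : 1 ≤ K) {s : ℝ} (h1 : (K:ℝ)^2 - K ≤ s) (h2 : s < (K:ℝ)^2 + K) :
    ⌊Real.sqrt (s + 1 / 4) + 1 / 2⌋ = (K : ℤ) := by
  have hK1 : (1:ℝ) ≤ (K:ℝ) := by exact_mod_cast hK
  have hs0 : (0:ℝ) ≤ s + 1 / 4 := by nlinarith
  have hl : (K:ℝ) - 1/2 ≤ Real.sqrt (s + 1 / 4) := by
    rw [show (K:ℝ) - 1/2 = Real.sqrt (((K:ℝ) - 1/2)^2) from
      (Real.sqrt_sq (by linarith)).symm]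
    exact Real.sqrt_le_sqrt (by nlinarith)
  have hr : Real.sqrt (s + 1 / 4) < (K:ℝ) + 1/2 := by
    rw [Real.sqrt_lt' (by linarith)]
    nlinarith
  rw [Int.floor_eq_iff]
  push_cast
  constructor <;> linarith

lemma f_eq (m K : ℕ) (hK : 1 ≤ K) {s : ℝ} (h1 : (K:ℝ)^2 - K ≤ s) (h2 : s < (K:ℝ)^2 + K) :
    f m s = a m K := by
  unfold f a
  rw [floor_eq K hK h1 h2]

lemma integral_block (m : ℕ) (hm : 1 ≤ m) (K : ℕ) (hK : 1 ≤ K) :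
    ∫ s in ((K:ℝ)^2 - K)..((K:ℝ)^2 + K), f m s = 2 * K * a m K := by
  have hKr : (0:ℝ) ≤ (K:ℝ) := by positivity
  have hle : (K:ℝ)^2 - K ≤ (K:ℝ)^2 + K := by linarith
  have hcongr : ∫ s in ((K:ℝ)^2 - K)..((K:ℝ)^2 + K), f m s
      = ∫ s in ((K:ℝ)^2 - K)..((K:ℝ)^2 + K), a m K := by
    apply intervalIntegral.integral_congr_ae
    have hne : ∀ᵐ x : ℝ, x ≠ (K:ℝ)^2 + K := by
      rw [ae_iff]
      have : {x : ℝ | ¬ x ≠ (K:ℝ)^2 + K} = {(K:ℝ)^2 + K} := by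
        ext x; simp
      rw [this]
      exact Real.volume_singleton
    filter_upwards [hne] with x hx hmem
    rw [Set.uIoc_of_le hle] at hmem
    exact f_eq m K hK hmem.1.le (lt_of_le_of_ne hmem.2 hx)
  rw [hcongr, intervalIntegral.integral_const, smul_eq_mul]
  ring

lemma integral_upto (m : ℕ) (hm : 1 ≤ m) :
    ∀ K : ℕ, 1 ≤ K → ∫ s in (0:ℝ)..((K:ℝ)^2 - K), f m s
      = ∑ k ∈ range (K - 1), 2 * ((k:ℝ) + 1) * a m (k + 1) := by
  refine Nat.le_induction ?_ ?_
  · norm_num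
  · intro K hK ih
    obtain ⟨K', rfl⟩ : ∃ K', K = K' + 1 := ⟨K - 1, by omega⟩
    have heq : ((K' + 1 + 1 : ℕ):ℝ)^2 - ((K' + 1 + 1 : ℕ):ℝ)
        = ((K' + 1 : ℕ):ℝ)^2 + ((K' + 1 : ℕ):ℝ) := by push_cast; ring
    rw [heq, ← intervalIntegral.integral_add_adjacent_intervals
        (f_intble m hm 0 (((K' + 1 : ℕ):ℝ)^2 - ((K' + 1 : ℕ):ℝ)))
        (f_intble m hm _ _), ih, integral_block m hm (K' + 1) (by omega)]
    have : (K' + 1 + 1) - 1 = (K' + 1 - 1) + 1 := by omega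
    rw [this, Finset.sum_range_succ]
    have h1 : K' + 1 - 1 = K' := by omega
    rw [h1]
    push_cast
    ring

/-- Partial sums. -/
noncomputable def S (m n : ℕ) : ℝ := ∑ k ∈ range n, a m (k + 1)

lemma a_period (m : ℕ) (k : ℕ) : a m (k + m) = a m k := by
  unfold a
  have h : (((k + m : ℕ) : ℤ)) % (m:ℤ) = (k:ℤ) % (m:ℤ) := by
    push_cast
    simp [Int.add_emod]
  rw [h]

lemma sum_id (n : ℕ) : ∑ j ∈ range n, (j:ℝ) = n * (n - 1) / 2 := by
  induction n with
  | zero => simp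
  | succ n ih => rw [Finset.sum_range_succ, ih]; push_cast; ring

lemma sum_sq (n : ℕ) : ∑ j ∈ range n, (j:ℝ)^2 = n * (n - 1) * (2 * n - 1) / 6 := by
  induction n with
  | zero => simp
  | succ n ih => rw [Finset.sum_range_succ, ih]; push_cast; ring

lemma sum_a_zero (m : ℕ) (hm : 1 ≤ m) : ∑ j ∈ range m, a m j = 0 := by
  have hm0 : (m:ℝ) ≠ 0 := by positivity
  have hterm : ∀ j ∈ range m, a m j
      = (j:ℝ) * ((m:ℝ) - j) / (2 * m) - (1 / 12) * ((m:ℝ) - 1 / m) := by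
    intro j hj
    have hj' : j < m := Finset.mem_range.mp hj
    unfold a
    rw [Int.emod_eq_of_lt (by positivity) (by exact_mod_cast hj')]
    push_cast
    ring
  rw [Finset.sum_congr rfl hterm]
  have hexp : ∀ j ∈ range m, (j:ℝ) * ((m:ℝ) - j) / (2 * m) - (1 / 12) * ((m:ℝ) - 1 / m)
      = (1 / (2 * (m:ℝ))) * ((m:ℝ) * j) - (1 / (2 * (m:ℝ))) * (j:ℝ)^2
        - (1 / 12) * ((m:ℝ) - 1 / m) := by
    intro j _; field_simp
  rw [Finset.sum_congr rfl hexp]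
  rw [Finset.sum_sub_distrib, Finset.sum_sub_distrib, ← Finset.mul_sum, ← Finset.mul_sum,
    ← Finset.mul_sum, sum_id, sum_sq, Finset.sum_const, Finset.card_range, nsmul_eq_mul]
  field_simp
  ring

lemma sum_shift (m : ℕ) (hm : 1 ≤ m) : ∀ n : ℕ, ∑ j ∈ range m, a m (n + j) = 0 := by
  intro n
  induction n with
  | zero => simpa using sum_a_zero m hm
  | succ n ih =>
    have h1 : ∑ j ∈ range (m + 1), a m (n + j)
        = ∑ j ∈ range m, a m (n + j) + a m (n + m) := Finset.sum_range_succ _ _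
    have h2 : ∑ j ∈ range (m + 1), a m (n + j)
        = ∑ j ∈ range m, a m (n + (j + 1)) + a m (n + 0) := Finset.sum_range_succ' _ _
    have h3 : ∑ j ∈ range m, a m (n + 1 + j) = ∑ j ∈ range m, a m (n + (j + 1)) := by
      apply Finset.sum_congr rfl
      intro j _
      congr 1
      omega
    rw [h3]
    have := a_period m n
    have h4 : ∑ j ∈ range m, a m (n + (j + 1))
        = ∑ j ∈ range m, a m (n + j) + a m (n + m) - a m n := by
      rw [← h1] at *
      simp only [Nat.add_zero] at h2
      linarith [h2]
    rw [h4, this, ih]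
    ring

lemma sum_range_add' (f : ℕ → ℝ) (n : ℕ) : ∀ p : ℕ,
    ∑ k ∈ range (n + p), f k = ∑ k ∈ range n, f k + ∑ j ∈ range p, f (n + j) := by
  intro p
  induction p with
  | zero => simp
  | succ p ihp =>
    rw [show n + (p + 1) = (n + p) + 1 by omega, Finset.sum_range_succ, ihp,
      Finset.sum_range_succ]
    ring

lemma S_period (m : ℕ) (hm : 1 ≤ m) (n : ℕ) : S m (n + m) = S m n := by
  unfold S
  rw [sum_range_add' (fun k => a m (k + 1)) n m]
  have h0 : ∑ j ∈ range m, a m (n + j + 1) = ∑ j ∈ range m, a m ((n + 1) + j) := by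
    apply Finset.sum_congr rfl; intro j _; congr 1; omega
  rw [h0, sum_shift m hm]
  ring

lemma S_bound (m : ℕ) (hm : 1 ≤ m) (n : ℕ) : |S m n| ≤ 2 * (m:ℝ) * m := by
  induction n using Nat.strong_induction_on with
  | _ n ih =>
    rcases lt_or_ge n m with h | h
    · calc |S m n| ≤ ∑ k ∈ range n, |a m (k + 1)| := Finset.abs_sum_le_sum_abs _ _
        _ ≤ ∑ _k ∈ range n, 2 * (m:ℝ) := Finset.sum_le_sum fun k _ => a_bound m hm (k + 1)
        _ = n * (2 * (m:ℝ)) := by simp [mul_comm]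
        _ ≤ m * (2 * (m:ℝ)) := by
            have : (n:ℝ) ≤ m := by exact_mod_cast h.le
            nlinarith
        _ = 2 * (m:ℝ) * m := by ring
    · have hn : n = (n - m) + m := by omega
      rw [hn, S_period m hm]
      exact ih (n - m) (by omega)

lemma T_eq (m n : ℕ) : ∑ k ∈ range n, 2 * ((k:ℝ) + 1) * a m (k + 1)
    = 2 * n * S m n - 2 * ∑ k ∈ range n, S m k := by
  induction n with
  | zero => simp [S]
  | succ n ih =>
    rw [Finset.sum_range_succ, ih, Finset.sum_range_succ (f := S m)]
    have hS : S m (n + 1) = S m n + a m (n + 1) := Finset.sum_range_succ _ _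
    rw [hS]
    push_cast
    ring

lemma T_bound (m : ℕ) (hm : 1 ≤ m) (n : ℕ) :
    |∑ k ∈ range n, 2 * ((k:ℝ) + 1) * a m (k + 1)| ≤ 8 * n * m^2 := by
  rw [T_eq]
  have h1 : |S m n| ≤ 2 * (m:ℝ) * m := S_bound m hm n
  have h2 : |∑ k ∈ range n, S m k| ≤ n * (2 * (m:ℝ) * m) := by
    calc |∑ k ∈ range n, S m k| ≤ ∑ k ∈ range n, |S m k| := Finset.abs_sum_le_sum_abs _ _
      _ ≤ ∑ _k ∈ range n, 2 * (m:ℝ) * m := Finset.sum_le_sum fun k _ => S_bound m hm k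
      _ = n * (2 * (m:ℝ) * m) := by simp [mul_comm]
  have h3 : |2 * (n:ℝ) * S m n - 2 * ∑ k ∈ range n, S m k|
      ≤ 2 * n * |S m n| + 2 * |∑ k ∈ range n, S m k| := by
    rw [sub_eq_add_neg]
    refine (abs_add_le _ _).trans ?_
    rw [abs_neg, abs_mul, abs_mul, abs_mul]
    simp [abs_of_nonneg, Nat.cast_nonneg]
  have hn0 : (0:ℝ) ≤ (n:ℝ) := Nat.cast_nonneg n
  nlinarith [abs_nonneg (S m n)]

lemma exists_K (t : ℝ) (ht : 1 ≤ t) :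
    ∃ K : ℕ, 1 ≤ K ∧ (K:ℝ)^2 - K ≤ t ∧ t < (K:ℝ)^2 + K := by
  have ht0 : (0:ℝ) ≤ t + 1/4 := by linarith
  set u := Real.sqrt (t + 1/4) with hu
  have hu2 : u^2 = t + 1/4 := Real.sq_sqrt ht0
  have hun : 0 ≤ u := Real.sqrt_nonneg _
  have hu1 : 1 ≤ u := by nlinarith
  set k : ℤ := ⌊u + 1/2⌋ with hk
  have hk1 : 1 ≤ k := Int.le_floor.mpr (by push_cast; linarith)
  have hfl : (k:ℝ) ≤ u + 1/2 := Int.floor_le _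
  have hfr : u + 1/2 < (k:ℝ) + 1 := Int.lt_floor_add_one _
  have hcast : ((k.toNat : ℕ):ℝ) = (k:ℝ) := by
    exact_mod_cast Int.toNat_of_nonneg (le_trans zero_le_one hk1)
  refine ⟨k.toNat, by omega, by rw [hcast]; nlinarith, by rw [hcast]; nlinarith⟩

end LuneAux

open LuneAux in
/-- Key averaging estimate for the lune: the average of
`p(s)(m − p(s))/(2m) − (1/12)(m − 1/m)`, where `p(s) = ⌊√(s+1/4)+1/2⌋ mod m`,
is `O(t^{-1/2})`. -/
theorem lune_constant_term_average (m : ℕ) (hm : 1 ≤ m) :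
    ∃ C : ℝ, ∀ t : ℝ, 1 ≤ t →
      |(1 / t) * ∫ s in (0:ℝ)..t,
          (((⌊Real.sqrt (s + 1 / 4) + 1 / 2⌋ % (m : ℤ) : ℤ) : ℝ)
              * ((m : ℝ) - ((⌊Real.sqrt (s + 1 / 4) + 1 / 2⌋ % (m : ℤ) : ℤ) : ℝ)) / (2 * m)
            - (1 / 12) * ((m : ℝ) - 1 / m))| ≤ C * t ^ (-(1/2) : ℝ) := by
  refine ⟨100 * (m:ℝ)^2, fun t ht => ?_⟩
  have ht0 : (0:ℝ) < t := by linarith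
  obtain ⟨K, hK1, hKl, hKr⟩ := exists_K t ht
  have hKr' : (0:ℝ) < (K:ℝ) := by exact_mod_cast hK1
  -- the integral equals the block sums plus a partial block
  have hI : (∫ s in (0:ℝ)..t, f m s)
      = (∑ k ∈ range (K - 1), 2 * ((k:ℝ) + 1) * a m (k + 1))
        + (t - ((K:ℝ)^2 - K)) * a m K := by
    rw [← intervalIntegral.integral_add_adjacent_intervals
        (f_intble m hm 0 ((K:ℝ)^2 - K)) (f_intble m hm ((K:ℝ)^2 - K) t),
      integral_upto m hm K hK1]
    congr 1
    rw [intervalIntegral.integral_congr (g := fun _ => a m K) ?_,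
      intervalIntegral.integral_const, smul_eq_mul]
    intro x hx
    rw [Set.uIcc_of_le hKl] at hx
    exact f_eq m K hK1 hx.1 (lt_of_le_of_lt hx.2 hKr)
  -- bound the integral by 12 K m²
  have hIb : |∫ s in (0:ℝ)..t, f m s| ≤ 12 * K * (m:ℝ)^2 := by
    rw [hI]
    have h1 : |∑ k ∈ range (K - 1), 2 * ((k:ℝ) + 1) * a m (k + 1)|
        ≤ 8 * (K:ℝ) * m^2 := by
      refine (T_bound m hm (K - 1)).trans ?_
      have : ((K - 1 : ℕ):ℝ) ≤ (K:ℝ) := by exact_mod_cast Nat.sub_le K 1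
      nlinarith [sq_nonneg ((m:ℝ))]
    have h2 : |(t - ((K:ℝ)^2 - K)) * a m K| ≤ 2 * K * (2 * m) := by
      rw [abs_mul]
      have ha : |t - ((K:ℝ)^2 - K)| ≤ 2 * K := by
        rw [abs_of_nonneg (by linarith)]; linarith
      have hb : |a m K| ≤ 2 * m := a_bound m hm K
      have := abs_nonneg (t - ((K:ℝ)^2 - K))
      nlinarith [abs_nonneg (a m K)]
    have hmr : (1:ℝ) ≤ (m:ℝ) := by exact_mod_cast hm
    calc |_ + _| ≤ |∑ k ∈ range (K - 1), 2 * ((k:ℝ) + 1) * a m (k + 1)|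
          + |(t - ((K:ℝ)^2 - K)) * a m K| := abs_add_le _ _
      _ ≤ 8 * (K:ℝ) * m^2 + 2 * K * (2 * m) := by linarith
      _ ≤ 12 * K * (m:ℝ)^2 := by
          nlinarith [mul_nonneg (mul_nonneg hKr'.le (by linarith : (0:ℝ) ≤ (m:ℝ)))
            (by linarith : (0:ℝ) ≤ (m:ℝ) - 1)]
  -- K ≤ 2 √t
  set r := Real.sqrt t with hr
  have hrt : r^2 = t := Real.sq_sqrt ht0.le
  have hrn : 0 ≤ r := Real.sqrt_nonneg _
  have hr1 : 1 ≤ r := by nlinarith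
  have hKle : (K:ℝ) ≤ 2 * r := by
    nlinarith [sq_nonneg ((K:ℝ) - r - 1), sq_nonneg ((K:ℝ) + r)]
  -- finish
  have hpow : t ^ (-(1/2) : ℝ) = 1 / r := by
    rw [Real.rpow_neg ht0.le, ← Real.sqrt_eq_rpow, one_div]
  show |(1 / t) * ∫ s in (0:ℝ)..t, f m s| ≤ 100 * (m:ℝ)^2 * t ^ (-(1/2) : ℝ)
  rw [hpow, abs_mul, abs_of_pos (by positivity : (0:ℝ) < 1 / t)]
  have hfin : |∫ s in (0:ℝ)..t, f m s| ≤ 24 * (m:ℝ)^2 * r := by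
    nlinarith [sq_nonneg ((m:ℝ))]
  have hr0 : (0:ℝ) < r := by linarith
  rw [div_mul_eq_mul_div, one_mul, div_le_iff₀ ht0, mul_assoc,
    show (1:ℝ) / r * t = r from by rw [← hrt]; field_simp]
  nlinarith [sq_nonneg ((m:ℝ))]
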